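/- Let k be a positive integer, δ > 0 a real number, and let A be a finite nonempty multiset of elements of the free group F_k on k generators such that A has detection probability at least δ in F_k. Then the sum over the elements w of A (counted with multiplicity) of the reduced word length of w is at least δ·k·|A|; equivalently, the average reduced word length of an element of A is at least δ·k. -/

import Mathlib

open scoped Classical

/-- `A` has detection probability at least `δ` in `G`. -/
def Detects {G : Type*} [Group G] (A : Multiset G) (δ : ℝ) : Prop :=
  ∀ H : Subgroup G, H ≠ ⊤ →
    ((A.filter (fun a => a ∈ H)).card : ℝ) ≤ (1 - δ) * (Multiset.card A : ℝ)

noncomputable def phi (k : ℕ) (i : Fin k) : FreeGroup (Fin k) →* Multiplicative ℤ :=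
  FreeGroup.lift (fun j => if j = i then Multiplicative.ofAdd (1:ℤ) else 1)

lemma phi_ker_ne_top (k : ℕ) (i : Fin k) : (phi k i).ker ≠ ⊤ := by
  intro h
  have h1 : FreeGroup.of i ∈ (phi k i).ker := h ▸ Subgroup.mem_top _
  rw [MonoidHom.mem_ker] at h1
  simp only [phi, FreeGroup.lift_apply_of, if_pos rfl] at h1
  exact absurd h1 (by decide)

lemma mem_ker_of_not_mem (k : ℕ) (i : Fin k) (a : FreeGroup (Fin k))
    (h : ∀ x ∈ a.toWord, x.1 ≠ i) : a ∈ (phi k i).ker := by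
  rw [MonoidHom.mem_ker, ← FreeGroup.mk_toWord (x := a), phi, FreeGroup.lift_mk]
  apply List.prod_eq_one
  intro y hy
  rw [List.mem_map] at hy
  obtain ⟨x, hx, rfl⟩ := hy
  have hxi := h x hx
  cases x.2 <;> simp [hxi]

lemma card_bound (k : ℕ) (a : FreeGroup (Fin k)) :
    (Finset.univ.filter (fun i : Fin k => a ∉ (phi k i).ker)).card ≤ a.toWord.length := by
  have hsub : Finset.univ.filter (fun i : Fin k => a ∉ (phi k i).ker)
      ⊆ (a.toWord.map Prod.fst).toFinset := by
    intro i hi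
    rw [Finset.mem_filter] at hi
    rw [List.mem_toFinset, List.mem_map]
    by_contra hc
    push_neg at hc
    exact hi.2 (mem_ker_of_not_mem k i a (fun x hx => fun he => hc x hx he))
  calc _ ≤ (a.toWord.map Prod.fst).toFinset.card := Finset.card_le_card hsub
    _ ≤ (a.toWord.map Prod.fst).length := List.toFinset_card_le _
    _ = a.toWord.length := List.length_map _

lemma swap_sum {α : Type*} (k : ℕ) (p : Fin k → α → Prop) [inst : ∀ i, DecidablePred (p i)]
    (A : Multiset α) :
    ∑ i : Fin k, A.countP (p i) =
      (A.map (fun a => (Finset.univ.filter (fun i => p i a)).card)).sum := by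
  induction A using Multiset.induction with
  | empty => simp
  | cons a s ih =>
    simp only [Multiset.countP_cons, Multiset.map_cons, Multiset.sum_cons,
      Finset.sum_add_distrib, ih, Finset.card_filter]
    ring

theorem stmt19 (k : ℕ) (hk : 0 < k) (δ : ℝ) (hδ : 0 < δ)
    (A : Multiset (FreeGroup (Fin k))) (hA : A ≠ 0) (hdet : Detects A δ) :
    δ * k * (Multiset.card A : ℝ) ≤
      (((A.map (fun w => (FreeGroup.toWord w).length)).sum : ℕ) : ℝ) := by
  have key : ∀ i : Fin k, δ * (Multiset.card A : ℝ) ≤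
      (A.countP (fun a => a ∉ (phi k i).ker) : ℝ) := by
    intro i
    have h1 := hdet (phi k i).ker (phi_ker_ne_top k i)
    have h1' : ((A.countP (fun a => a ∈ (phi k i).ker) : ℕ) : ℝ)
        ≤ (1 - δ) * (Multiset.card A : ℝ) := by
      rw [Multiset.countP_eq_card_filter]
      convert h1 using 6
    have h2n : A.countP (fun a => a ∈ (phi k i).ker)
        + A.countP (fun a => a ∉ (phi k i).ker) = Multiset.card A := by
      rw [Multiset.countP_eq_card_filter, Multiset.countP_eq_card_filter,
        ← Multiset.card_add, Multiset.filter_add_not]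
    have h2 : ((A.countP (fun a => a ∈ (phi k i).ker) : ℕ) : ℝ)
        + ((A.countP (fun a => a ∉ (phi k i).ker) : ℕ) : ℝ) = (Multiset.card A : ℝ) := by
      exact_mod_cast congrArg (Nat.cast : ℕ → ℝ) h2n
    linarith [h1', h2]
  have step1 : δ * k * (Multiset.card A : ℝ) ≤
      ((∑ i : Fin k, A.countP (fun a => a ∉ (phi k i).ker) : ℕ) : ℝ) := by
    push_cast
    calc δ * k * (Multiset.card A : ℝ) = ∑ _i : Fin k, δ * (Multiset.card A : ℝ) := by
          simp [Finset.sum_const]; ring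
      _ ≤ ∑ i : Fin k, (A.countP (fun a => a ∉ (phi k i).ker) : ℝ) :=
          Finset.sum_le_sum (fun i _ => key i)
  have step2 : (∑ i : Fin k, A.countP (fun a => a ∉ (phi k i).ker)) ≤
      (A.map (fun w => (FreeGroup.toWord w).length)).sum := by
    rw [swap_sum k (fun i a => a ∉ (phi k i).ker) A]
    exact Multiset.sum_map_le_sum_map _ _ (fun a _ => card_bound k a)
  exact step1.trans (Nat.cast_le.mpr step2)
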